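/- For every natural number n ≥ 2, ∑_{l=1}^{n-1} csc(πl/n) = ∑_{l=1}^{n-1} cot(πl/(2n)). -/

import Mathlib

open Real Finset

lemma csc_eq_cot_half_sub_cot (θ : ℝ) (h1 : 0 < θ) (h2 : θ < π) :
    (Real.sin θ)⁻¹ = Real.cot (θ / 2) - Real.cot θ := by
  have hs : Real.sin θ ≠ 0 := ne_of_gt (Real.sin_pos_of_pos_of_lt_pi h1 h2)
  have hs2 : Real.sin (θ / 2) ≠ 0 :=
    ne_of_gt (Real.sin_pos_of_pos_of_lt_pi (by linarith) (by linarith [Real.pi_pos]))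
  have hsin : Real.sin θ = 2 * Real.sin (θ / 2) * Real.cos (θ / 2) := by
    have := Real.sin_two_mul (θ / 2)
    rw [show 2 * (θ / 2) = θ by ring] at this
    linarith
  have hcos : Real.cos θ = 2 * Real.cos (θ / 2) ^ 2 - 1 := by
    have := Real.cos_two_mul (θ / 2)
    rw [show 2 * (θ / 2) = θ by ring] at this
    linarith
  rw [Real.cot_eq_cos_div_sin, Real.cot_eq_cos_div_sin]
  field_simp
  rw [hsin, hcos]
  ring

lemma cot_pi_sub (x : ℝ) : Real.cot (π - x) = -Real.cot x := by
  rw [Real.cot_eq_cos_div_sin, Real.cot_eq_cos_div_sin, Real.cos_pi_sub, Real.sin_pi_sub,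
    neg_div]

theorem csc_sum_eq_cot_sum (n : ℕ) (hn : 2 ≤ n) :
    ∑ l ∈ Finset.Ico 1 n, (Real.sin (π * l / n))⁻¹ =
      ∑ l ∈ Finset.Ico 1 n, Real.cot (π * l / (2 * n)) := by
  have hn0 : (0 : ℝ) < n := by positivity
  have hbound : ∀ l ∈ Finset.Ico 1 n, 0 < π * l / n ∧ π * l / n < π := by
    intro l hl
    rw [Finset.mem_Ico] at hl
    have h1 : (1 : ℝ) ≤ l := by exact_mod_cast hl.1
    have h2 : (l : ℝ) < n := by exact_mod_cast hl.2
    constructor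
    · positivity
    · rw [div_lt_iff₀ hn0]
      nlinarith [Real.pi_pos]
  have hzero : ∑ l ∈ Finset.Ico 1 n, Real.cot (π * l / n) = 0 := by
    apply Finset.sum_involution (fun l _ => n - l)
    · intro l hl
      rw [Finset.mem_Ico] at hl
      have hle : l ≤ n := le_of_lt hl.2
      have : π * ((n : ℝ) - l) / n = π - π * l / n := by
        field_simp
      have hcast : ((n - l : ℕ) : ℝ) = (n : ℝ) - l := by
        push_cast [hle]; ring
      rw [hcast, this, cot_pi_sub]
      ring
    · intro l hl hne hfix
      apply hne
      rw [Finset.mem_Ico] at hl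
      have h2l : 2 * l = n := by omega
      have : π * l / n = π / 2 := by
        have : (n : ℝ) = 2 * l := by exact_mod_cast h2l.symm
        rw [this]
        have hl0 : (0 : ℝ) < l := by
          have : (1 : ℝ) ≤ l := by exact_mod_cast hl.1
          linarith
        field_simp
      rw [this, Real.cot_eq_cos_div_sin, Real.cos_pi_div_two, zero_div]
    · intro l hl
      rw [Finset.mem_Ico] at hl ⊢
      omega
    · intro l hl
      rw [Finset.mem_Ico] at hl
      omega
  have key : ∑ l ∈ Finset.Ico 1 n, (Real.sin (π * l / n))⁻¹ =
      ∑ l ∈ Finset.Ico 1 n, (Real.cot (π * l / (2 * n)) - Real.cot (π * l / n)) := by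
    apply Finset.sum_congr rfl
    intro l hl
    obtain ⟨h1, h2⟩ := hbound l hl
    rw [csc_eq_cot_half_sub_cot _ h1 h2]
    congr 2
    ring
  rw [key, Finset.sum_sub_distrib, hzero, sub_zero]
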